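/- Let T = T₁ ∨ T₂ be a tree with |T₁| = n and |T₂| = m (n or m may be 0). A permutation σ ∈ S_{n+m+1} belongs to S_T if and only if σ(n+1) = 1, st((σ(1),…,σ(n))) ∈ S_{T₁}, and st((σ(n+2),…,σ(n+m+1))) ∈ S_{T₂}. -/

import Mathlib

/-- The minimum of `a :: l` (computed by folding `min`) is a member of `a :: l`. -/
lemma foldr_min_mem (a : ℤ) : ∀ l : List ℤ, l.foldr min a ∈ a :: l := by
  intro l
  induction l with
  | nil => simp
  | cons b l ih =>
    simp only [List.foldr_cons]
    rcases min_choice b (l.foldr min a) with h | h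
    · rw [h]; simp
    · rw [h]
      rcases List.mem_cons.mp ih with h' | h'
      · simp [h']
      · simp [h']

/-- The planar binary tree `φ(I)` associated to a list `I` of (distinct) integers:
`φ` of the empty list is the empty tree `|`, and `φ(I) = φ(I₁) ∨ φ(I₂)` where
`I = I₁ · (min I) · I₂` is the splitting of `I` at its minimal entry. -/
def phi : List ℤ → Tree Unit
  | [] => Tree.nil
  | a :: l =>
    Tree.node ()
      (phi ((a :: l).take ((a :: l).idxOf (l.foldr min a))))
      (phi ((a :: l).drop ((a :: l).idxOf (l.foldr min a) + 1)))
termination_by l => l.length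
decreasing_by
  · have hm := foldr_min_mem a l
    have hk := List.idxOf_lt_length_iff.mpr hm
    simp only [List.length_take, List.length_cons, List.foldr_attach] at *
    omega
  · simp only [List.length_drop, List.length_cons]
    omega

/-- The standardization of a list `I` of distinct integers: the list whose `j`-th entry is
the (1-indexed) position of `I_j` in the increasing ordering of the entries of `I`. -/
def stdz (I : List ℤ) : List ℤ :=
  I.map (fun x => ((I.filter (fun y => y < x)).length : ℤ) + 1)

/-- `l` is (the list of values of) a permutation of `{1, …, n}`. -/
def IsPermList (n : ℕ) (l : List ℤ) : Prop :=
  l.Perm ((List.range n).map (fun k => (k : ℤ) + 1))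

/-- `S_T`: the set of permutations `σ ∈ S_{|T|}` (identified with their lists of values
`(σ(1),…,σ(n))`) such that `φ(σ) = T`. -/
def STree (T : Tree Unit) : Set (List ℤ) :=
  {l | IsPermList T.numNodes l ∧ phi l = T}

lemma foldr_min_le (a : ℤ) (l : List ℤ) : ∀ x ∈ a :: l, l.foldr min a ≤ x := by
  induction l with
  | nil => intro x hx; simp at hx; simp [hx]
  | cons b t ih =>
    intro x hx
    simp only [List.foldr_cons]
    rcases List.mem_cons.mp hx with h | h
    · exact le_trans (min_le_right _ _) (ih x (by simp [h]))
    · rcases List.mem_cons.mp h with h | h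
      · exact h ▸ min_le_left _ _
      · exact le_trans (min_le_right _ _) (ih x (by simp [h]))

lemma phi_cons (a : ℤ) (l : List ℤ) :
    phi (a :: l) = Tree.node ()
      (phi ((a :: l).take ((a :: l).idxOf (l.foldr min a))))
      (phi ((a :: l).drop ((a :: l).idxOf (l.foldr min a) + 1))) := by
  rw [phi]

lemma phi_nil : phi [] = Tree.nil := by rw [phi]

lemma phi_numNodes : ∀ (n : ℕ) (l : List ℤ), l.length ≤ n → (phi l).numNodes = l.length := by
  intro n
  induction n with
  | zero => intro l hl; rw [List.length_eq_zero_iff.mp (Nat.le_zero.mp hl)]; simp [phi_nil]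
  | succ n ih =>
    intro l hl
    match l with
    | [] => simp [phi_nil]
    | a :: t =>
      rw [phi_cons]
      have hk : (a :: t).idxOf (t.foldr min a) < (a :: t).length :=
        List.idxOf_lt_length_iff.mpr (foldr_min_mem a t)
      simp only [List.length_cons] at hk hl
      have h1 := ih ((a :: t).take ((a :: t).idxOf (t.foldr min a)))
        (by simp only [List.length_take, List.length_cons]; omega)
      have h2 := ih ((a :: t).drop ((a :: t).idxOf (t.foldr min a) + 1))
        (by simp only [List.length_drop, List.length_cons]; omega)
      simp only [BinaryTree.numNodes, h1, h2, List.length_take, List.length_drop,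
        List.length_cons]
      omega

lemma idxOf_map (f : ℤ → ℤ) (m : ℤ) :
    ∀ l : List ℤ, (∀ x ∈ l, (f x = f m ↔ x = m)) →
      (l.map f).idxOf (f m) = l.idxOf m := by
  intro l
  induction l with
  | nil => simp
  | cons b t ih =>
    intro h
    simp only [List.map_cons, List.idxOf_cons]
    have hb := h b (by simp)
    by_cases hbm : b = m
    · simp [hbm]
    · have : ¬ (f b = f m) := fun hh => hbm (hb.mp hh)
      have h1 : (f b == f m) = false := beq_eq_false_iff_ne.mpr this
      have h2 : (b == m) = false := beq_eq_false_iff_ne.mpr hbm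
      rw [h1, h2, cond_false, cond_false, ih (fun x hx => h x (by simp [hx]))]

lemma phi_map_aux (f : ℤ → ℤ) :
    ∀ (n : ℕ) (l : List ℤ), l.length ≤ n →
      (∀ x ∈ l, ∀ y ∈ l, (x < y ↔ f x < f y)) → phi (l.map f) = phi l := by
  intro n
  induction n with
  | zero => intro l hl _; rw [List.length_eq_zero_iff.mp (Nat.le_zero.mp hl)]; rfl
  | succ n ih =>
    intro l hl h
    match l with
    | [] => rfl
    | a :: t =>
      have hmem : t.foldr min a ∈ a :: t := foldr_min_mem a t
      set m := t.foldr min a with hm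
      -- facts about f on members
      have hinj : ∀ x ∈ a :: t, (f x = f m ↔ x = m) := by
        intro x hx
        constructor
        · intro hfx
          rcases lt_trichotomy x m with hc | hc | hc
          · exact absurd ((h x hx m hmem).mp hc) (by rw [hfx]; exact lt_irrefl _)
          · exact hc
          · exact absurd ((h m hmem x hx).mp hc) (by rw [hfx]; exact lt_irrefl _)
        · intro hx; rw [hx]
      -- the min of the mapped list is f m
      have hmin : (t.map f).foldr min (f a) = f m := by
        apply le_antisymm
        · refine foldr_min_le (f a) (t.map f) (f m) ?_
          rcases List.mem_cons.mp hmem with h' | h'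
          · rw [h']; exact List.mem_cons_self
          · exact List.mem_cons_of_mem _ (List.mem_map_of_mem h')
        · have hmem2 := foldr_min_mem (f a) (t.map f)
          have : ∃ z ∈ a :: t, (t.map f).foldr min (f a) = f z := by
            rcases List.mem_cons.mp hmem2 with h' | h'
            · exact ⟨a, by simp, h'⟩
            · rcases List.mem_map.mp h' with ⟨z, hz, hz'⟩
              exact ⟨z, List.mem_cons_of_mem _ hz, hz'.symm⟩
          rcases this with ⟨z, hz, hz'⟩
          rw [hz']
          by_contra hlt
          push_neg at hlt
          exact absurd ((h z hz m hmem).mpr hlt) (not_lt.mpr (foldr_min_le a t z hz))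
      have hidx : ((a :: t).map f).idxOf (f m) = (a :: t).idxOf m :=
        idxOf_map f m (a :: t) hinj
      have hklt : (a :: t).idxOf m < (a :: t).length := List.idxOf_lt_length_iff.mpr hmem
      simp only [List.length_cons] at hklt hl
      rw [List.map_cons, phi_cons, phi_cons]
      rw [← List.map_cons, hmin, hidx, ← List.map_take, ← List.map_drop]
      have e1 := ih (((a :: t)).take ((a :: t).idxOf m))
        (by simp only [List.length_take, List.length_cons]; omega)
        (fun x hx y hy => h x (List.take_subset _ _ hx) y (List.take_subset _ _ hy))
      have e2 := ih (((a :: t)).drop ((a :: t).idxOf m + 1))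
        (by simp only [List.length_drop, List.length_cons]; omega)
        (fun x hx y hy => h x (List.drop_subset _ _ hx) y (List.drop_subset _ _ hy))
      rw [e1, e2]

lemma phi_map (f : ℤ → ℤ) (l : List ℤ)
    (h : ∀ x ∈ l, ∀ y ∈ l, (x < y ↔ f x < f y)) : phi (l.map f) = phi l :=
  phi_map_aux f l.length l le_rfl h

lemma phi_split (l₁ l₂ : List ℤ) (a : ℤ) (h : ∀ x ∈ l₁ ++ l₂, a < x) :
    phi (l₁ ++ a :: l₂) = Tree.node () (phi l₁) (phi l₂) := by
  have hne : l₁ ++ a :: l₂ ≠ [] := by simp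
  obtain ⟨c, r, hcr⟩ := List.exists_cons_of_ne_nil hne
  have hmem : a ∈ l₁ ++ a :: l₂ := by simp
  have hmin : r.foldr min c = a := by
    apply le_antisymm
    · have := foldr_min_le c r a (by rw [← hcr]; exact hmem)
      exact this
    · have := foldr_min_mem c r
      rw [← hcr] at this
      rcases List.mem_append.mp this with h' | h'
      · exact le_of_lt (h _ (List.mem_append_left _ h'))
      · rcases List.mem_cons.mp h' with h'' | h''
        · exact le_of_eq h''.symm
        · exact le_of_lt (h _ (List.mem_append_right _ h''))
  have hnotmem : a ∉ l₁ := fun hc => lt_irrefl a (h a (List.mem_append_left _ hc))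
  have hidx : (l₁ ++ a :: l₂).idxOf a = l₁.length := by
    rw [List.idxOf_append_of_notMem hnotmem]
    simp [List.idxOf_cons_self]
  rw [hcr, phi_cons, ← hcr, hmin, hidx]
  congr 1
  · rw [List.take_left' rfl]
  · have e : l₁ ++ a :: l₂ = (l₁ ++ [a]) ++ l₂ := by simp
    rw [show l₁.length + 1 = (l₁ ++ [a]).length by simp, e, List.drop_left]

lemma rangeCast (n : ℕ) :
    (do let a ← List.range n; pure ((a:ℤ))) = (List.range n).map (fun k : ℕ => (k:ℤ)) := by
  simp [List.map_eq_flatMap]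

lemma isPermList_iff (n : ℕ) (l : List ℤ) :
    IsPermList n l ↔ l.Perm ((List.range n).map (fun k : ℕ => (k:ℤ) + 1)) := by
  unfold IsPermList
  rw [show (List.map (fun k : ℤ => k + 1) (do let a ← List.range n; pure ((a:ℤ))))
      = (List.range n).map (fun k : ℕ => (k:ℤ) + 1) by rw [rangeCast, List.map_map]; rfl]

lemma filter_lt_length_lt (l : List ℤ) (x y : ℤ) (hx : x ∈ l) (hxy : x < y) :
    (l.filter (fun z => z < x)).length < (l.filter (fun z => z < y)).length := by
  rw [← List.countP_eq_length_filter, ← List.countP_eq_length_filter]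
  have hperm := List.perm_cons_erase hx
  rw [hperm.countP_eq (fun z => decide (z < x)), hperm.countP_eq (fun z => decide (z < y))]
  simp only [List.countP_cons, decide_eq_true_eq, lt_irrefl, if_false, hxy, if_true]
  have : (l.erase x).countP (fun z => decide (z < x)) ≤
      (l.erase x).countP (fun z => decide (z < y)) := by
    apply List.countP_mono_left
    intro a _ ha
    simp only [decide_eq_true_eq] at *
    omega
  omega

lemma filter_lt_length_le (l : List ℤ) (x y : ℤ) (hxy : y ≤ x) :
    (l.filter (fun z => z < y)).length ≤ (l.filter (fun z => z < x)).length := by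
  rw [← List.countP_eq_length_filter, ← List.countP_eq_length_filter]
  apply List.countP_mono_left
  intro a _ ha
  simp only [decide_eq_true_eq] at *
  omega

lemma stdz_lt_iff (l : List ℤ) (x y : ℤ) (hx : x ∈ l) (hy : y ∈ l) :
    x < y ↔ ((l.filter (fun z => z < x)).length : ℤ) + 1 <
      ((l.filter (fun z => z < y)).length : ℤ) + 1 := by
  constructor
  · intro h
    have := filter_lt_length_lt l x y hx h
    omega
  · intro h
    by_contra hc
    push_neg at hc
    have := filter_lt_length_le l x y hc
    omega

lemma phi_stdz (l : List ℤ) : phi (stdz l) = phi l :=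
  phi_map _ l (fun x hx y hy => stdz_lt_iff l x y hx hy)

lemma stdz_length (l : List ℤ) : (stdz l).length = l.length := by
  simp [stdz]

lemma stdz_perm {l l' : List ℤ} (h : l.Perm l') : (stdz l).Perm (stdz l') := by
  unfold stdz
  have hf : ∀ x : ℤ, ((l.filter (fun y => y < x)).length : ℤ) + 1 =
      ((l'.filter (fun y => y < x)).length : ℤ) + 1 := by
    intro x
    rw [(h.filter _).length_eq]
  have e : (l.map fun x => ((l.filter (fun y => y < x)).length : ℤ) + 1)
      = l.map fun x => ((l'.filter (fun y => y < x)).length : ℤ) + 1 :=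
    List.map_congr_left (fun x _ => hf x)
  rw [e]
  exact h.map _

lemma stdz_sorted : ∀ l : List ℤ, l.Pairwise (· < ·) →
    stdz l = (List.range l.length).map (fun k : ℕ => (k : ℤ) + 1) := by
  intro l
  induction l with
  | nil => intro _; rfl
  | cons a t ih =>
    intro hs
    have ha : ∀ x ∈ t, a < x := fun x hx => (List.pairwise_cons.mp hs).1 x hx
    have hst : t.Pairwise (· < ·) := (List.pairwise_cons.mp hs).2
    have h1 : ((a :: t).filter (fun y => y < a)).length = 0 := by
      rw [List.length_eq_zero_iff]
      rw [List.filter_eq_nil_iff]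
      intro x hx
      simp only [decide_eq_true_eq, not_lt]
      rcases List.mem_cons.mp hx with h | h
      · omega
      · exact le_of_lt (ha x h)
    have h2 : ∀ x ∈ t, ((a :: t).filter (fun y => y < x)).length =
        (t.filter (fun y => y < x)).length + 1 := by
      intro x hx
      rw [List.filter_cons]
      simp [ha x hx]
    have lhs : stdz (a :: t) = 1 :: t.map (fun x => ((t.filter (fun y => y < x)).length : ℤ) + 2) := by
      unfold stdz
      rw [List.map_cons, h1]
      have hh : ∀ x ∈ t, ((List.filter (fun y => decide (y < x)) (a :: t)).length : ℤ) + 1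
          = ((List.filter (fun y => decide (y < x)) t).length : ℤ) + 2 := by
        intro x hx
        rw [h2 x hx]
        push_cast
        ring
      rw [List.map_congr_left hh]
      norm_num
    have e2 : t.map (fun x => ((t.filter (fun y => y < x)).length : ℤ) + 2)
        = (stdz t).map (· + 1) := by
      unfold stdz
      rw [List.map_map]
      exact List.map_congr_left (fun x _ => by simp only [Function.comp]; ring)
    rw [lhs, e2, ih hst, List.length_cons, List.range_succ_eq_map, List.map_cons,
      List.map_map, List.map_map]
    have hcomp : ((fun x : ℤ => x + 1) ∘ (fun k : ℕ => (k : ℤ) + 1))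
        = ((fun k : ℕ => (k : ℤ) + 1) ∘ Nat.succ) := by
      funext k
      simp only [Function.comp_apply, Nat.succ_eq_add_one]
      push_cast
      ring
    rw [hcomp]
    norm_num

lemma stdz_isPermList (l : List ℤ) (hnd : l.Nodup) : IsPermList l.length (stdz l) := by
  rw [isPermList_iff]
  set l' := l.insertionSort (· ≤ ·) with hl'
  have hperm : l'.Perm l := List.perm_insertionSort _ l
  have hsorted : l'.Pairwise (· ≤ ·) := List.pairwise_insertionSort _ l
  have hnd' : l'.Nodup := hperm.nodup_iff.mpr hnd
  have hslt : l'.Pairwise (· < ·) := by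
    have := List.Pairwise.and hsorted hnd'
    exact this.imp (fun h => lt_of_le_of_ne h.1 h.2)
  have := stdz_sorted l' hslt
  rw [hperm.length_eq] at this
  exact this ▸ stdz_perm hperm.symm

lemma isPermList_length {n : ℕ} {l : List ℤ} (h : IsPermList n l) : l.length = n := by
  rw [isPermList_iff] at h
  simpa using h.length_eq

lemma isPermList_nodup {n : ℕ} {l : List ℤ} (h : IsPermList n l) : l.Nodup := by
  rw [isPermList_iff] at h
  refine h.nodup_iff.mpr ?_
  refine List.nodup_range.map ?_
  intro a b hab
  have h' : (a : ℤ) + 1 = (b : ℤ) + 1 := hab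
  omega

lemma isPermList_mem {n : ℕ} {l : List ℤ} (h : IsPermList n l) {x : ℤ} (hx : x ∈ l) :
    1 ≤ x ∧ x ≤ n := by
  rw [isPermList_iff] at h
  obtain ⟨k, hk, rfl⟩ := List.mem_map.mp (h.mem_iff.mp hx)
  have := List.mem_range.mp hk
  omega

lemma isPermList_one_mem {n : ℕ} {l : List ℤ} (h : IsPermList (n + 1) l) : (1 : ℤ) ∈ l := by
  rw [isPermList_iff] at h
  exact h.mem_iff.mpr (List.mem_map.mpr ⟨0, List.mem_range.mpr (by omega), by norm_num⟩)

/-- Characterization of the permutations associated to a grafted tree `T = T₁ ∨ T₂`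
with `|T₁| = n`, `|T₂| = m`: a permutation `σ ∈ S_{n+m+1}` belongs to `S_T` iff
`σ(n+1) = 1`, `st((σ(1),…,σ(n))) ∈ S_{T₁}` and `st((σ(n+2),…,σ(n+m+1))) ∈ S_{T₂}`. -/
theorem mem_STree_node_iff (T₁ T₂ : Tree Unit) (σ : List ℤ)
    (hσ : IsPermList (T₁.numNodes + T₂.numNodes + 1) σ) :
    σ ∈ STree (Tree.node () T₁ T₂) ↔
      σ[T₁.numNodes]? = some 1 ∧
      stdz (σ.take T₁.numNodes) ∈ STree T₁ ∧
      stdz (σ.drop (T₁.numNodes + 1)) ∈ STree T₂ := by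
  have hlen : σ.length = T₁.numNodes + T₂.numNodes + 1 := isPermList_length hσ
  have hnd : σ.Nodup := isPermList_nodup hσ
  constructor
  · rintro ⟨-, hphi⟩
    obtain ⟨l₁, l₂, hσeq⟩ := List.append_of_mem (isPermList_one_mem hσ)
    have hnd' : (1 :: (l₁ ++ l₂)).Nodup := List.nodup_middle.mp (hσeq ▸ hnd)
    have h1not : (1 : ℤ) ∉ l₁ ++ l₂ := (List.nodup_cons.mp hnd').1
    have hgt : ∀ x ∈ l₁ ++ l₂, (1 : ℤ) < x := by
      intro x hx
      have hxσ : x ∈ σ := by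
        rw [hσeq]
        rcases List.mem_append.mp hx with h | h
        · exact List.mem_append_left _ h
        · exact List.mem_append_right _ (List.mem_cons_of_mem _ h)
      have h1 := (isPermList_mem hσ hxσ).1
      have hne : x ≠ 1 := fun hc => h1not (hc ▸ hx)
      omega
    have hsplit := phi_split l₁ l₂ 1 hgt
    rw [hσeq, hsplit] at hphi
    simp only [BinaryTree.node.injEq, true_and] at hphi
    obtain ⟨hT1, hT2⟩ := hphi
    have hl₁len : l₁.length = T₁.numNodes := by
      rw [← hT1, phi_numNodes l₁.length l₁ le_rfl]
    have hl₂len : l₂.length = T₂.numNodes := by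
      rw [← hT2, phi_numNodes l₂.length l₂ le_rfl]
    have htake : σ.take T₁.numNodes = l₁ := by
      rw [hσeq]; exact List.take_left' hl₁len
    have hdrop : σ.drop (T₁.numNodes + 1) = l₂ := by
      rw [hσeq, show T₁.numNodes + 1 = (l₁ ++ [(1:ℤ)]).length by simp [hl₁len],
        show l₁ ++ 1 :: l₂ = (l₁ ++ [(1:ℤ)]) ++ l₂ by simp, List.drop_left]
    have hnd₁ : l₁.Nodup := (List.nodup_append.mp (List.nodup_cons.mp hnd').2).1
    have hnd₂ : l₂.Nodup := (List.nodup_append.mp (List.nodup_cons.mp hnd').2).2.1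
    refine ⟨?_, ?_, ?_⟩
    · rw [hσeq, List.getElem?_append_right hl₁len.le]
      rw [hl₁len]
      simp
    · rw [htake]
      refine ⟨?_, ?_⟩
      · have := stdz_isPermList l₁ hnd₁
        rwa [hl₁len] at this
      · rw [phi_stdz, hT1]
    · rw [hdrop]
      refine ⟨?_, ?_⟩
      · have := stdz_isPermList l₂ hnd₂
        rwa [hl₂len] at this
      · rw [phi_stdz, hT2]
  · rintro ⟨hget, ⟨hp1, hphi1⟩, ⟨hp2, hphi2⟩⟩
    have hn : T₁.numNodes < σ.length := by
      by_contra hc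
      push_neg at hc
      rw [List.getElem?_eq_none hc] at hget
      simp at hget
    have hget' : σ.get ⟨T₁.numNodes, hn⟩ = 1 := by
      rw [List.getElem?_eq_getElem hn] at hget
      exact Option.some_injective _ hget
    have hσeq : σ = σ.take T₁.numNodes ++ 1 :: σ.drop (T₁.numNodes + 1) := by
      conv_lhs => rw [← List.take_append_drop T₁.numNodes σ]
      rw [List.drop_eq_getElem_cons hn, show σ[T₁.numNodes] = 1 from hget']
    set l₁ := σ.take T₁.numNodes with hl₁
    set l₂ := σ.drop (T₁.numNodes + 1) with hl₂
    have hnd' : (1 :: (l₁ ++ l₂)).Nodup := List.nodup_middle.mp (hσeq ▸ hnd)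
    have h1not : (1 : ℤ) ∉ l₁ ++ l₂ := (List.nodup_cons.mp hnd').1
    have hgt : ∀ x ∈ l₁ ++ l₂, (1 : ℤ) < x := by
      intro x hx
      have hxσ : x ∈ σ := by
        rw [hσeq]
        rcases List.mem_append.mp hx with h | h
        · exact List.mem_append_left _ h
        · exact List.mem_append_right _ (List.mem_cons_of_mem _ h)
      have h1 := (isPermList_mem hσ hxσ).1
      have hne : x ≠ 1 := fun hc => h1not (hc ▸ hx)
      omega
    refine ⟨hσ, ?_⟩
    rw [hσeq, phi_split l₁ l₂ 1 hgt]
    rw [← phi_stdz l₁, hphi1, ← phi_stdz l₂, hphi2]
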